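/- Let a, b be positive integers. The cardinality statistic A ↦ #A is ab/(a+b)-mesic under the action of rowmotion Φ_A on the set A([a]×[b]) of antichains of [a]×[b]: for every Φ_A-orbit O ⊆ A([a]×[b]), (1/#O)·Σ_{A∈O} #A = ab/(a+b). -/

import Mathlib

open scoped Classical in
/-- Rowmotion on antichains of a finite poset: `A` maps to the set of minimal
elements of the complement of the order ideal generated by `A`. -/
noncomputable def rowmotionA {P : Type*} [PartialOrder P] [Fintype P]
    (A : Finset P) : Finset P :=
  Finset.univ.filter (fun y =>
    ¬ (∃ p ∈ A, y ≤ p) ∧ ∀ z, ¬ (∃ p ∈ A, z ≤ p) → z ≤ y → z = y)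

namespace RowHom

open Finset

open scoped Classical

variable {a b : ℕ}

/-- staircase profile of a finset in the grid -/
def G (A : Finset (Fin a × Fin b)) (k : ℕ) : ℕ :=
  (A.filter (fun p => k ≤ (p.1 : ℕ))).sup (fun p => (p.2 : ℕ) + 1)

def rowOcc (A : Finset (Fin a × Fin b)) (k : ℕ) : Prop := ∃ p ∈ A, (p.1 : ℕ) = k

def colOcc (A : Finset (Fin a × Fin b)) (l : ℕ) : Prop := ∃ p ∈ A, (p.2 : ℕ) = l

def w (A : Finset (Fin a × Fin b)) (i : ℕ) : Prop :=
  if i % (a + b) < a then rowOcc A (i % (a + b)) else ¬ colOcc A (i % (a + b) - a)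

lemma G_anti (A : Finset (Fin a × Fin b)) {k k' : ℕ} (h : k ≤ k') : G A k' ≤ G A k := by
  apply Finset.sup_mono
  intro p hp
  simp only [Finset.mem_filter] at hp ⊢
  exact ⟨hp.1, le_trans h hp.2⟩

lemma G_le (A : Finset (Fin a × Fin b)) (k : ℕ) : G A k ≤ b := by
  apply Finset.sup_le
  intro p _
  exact p.2.2

lemma G_eq_zero (A : Finset (Fin a × Fin b)) {k : ℕ} (h : a ≤ k) : G A k = 0 := by
  unfold G
  convert Finset.sup_empty
  rw [Finset.filter_eq_empty_iff]
  intro p _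
  push_neg
  exact lt_of_lt_of_le p.1.2 h
  rfl

lemma G_attained (A : Finset (Fin a × Fin b)) {k : ℕ} (h : 0 < G A k) :
    ∃ p ∈ A, k ≤ (p.1 : ℕ) ∧ (p.2 : ℕ) + 1 = G A k := by
  have hne : (A.filter (fun p => k ≤ (p.1 : ℕ))).Nonempty := by
    by_contra hc
    rw [Finset.not_nonempty_iff_eq_empty] at hc
    rw [G, hc, Finset.sup_empty] at h
    exact absurd h (lt_irrefl 0)
  obtain ⟨p, hp, hval⟩ := Finset.exists_mem_eq_sup _ hne (fun p => (p.2 : ℕ) + 1)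
  rw [Finset.mem_filter] at hp
  exact ⟨p, hp.1, hp.2, hval.symm⟩

lemma notin_ideal (A : Finset (Fin a × Fin b)) (p : Fin a × Fin b) :
    (¬ ∃ q ∈ A, p ≤ q) ↔ G A (p.1 : ℕ) ≤ (p.2 : ℕ) := by
  rw [← not_lt]
  apply not_congr
  constructor
  · rintro ⟨q, hq, hle⟩
    rw [Prod.le_def] at hle
    have : q ∈ A.filter (fun r => (p.1 : ℕ) ≤ (r.1 : ℕ)) :=
      Finset.mem_filter.2 ⟨hq, hle.1⟩
    calc (p.2 : ℕ) < (q.2 : ℕ) + 1 := Nat.lt_succ_of_le hle.2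
    _ ≤ G A (p.1 : ℕ) := by unfold G; exact Finset.le_sup (f := fun r : Fin a × Fin b => (r.2 : ℕ) + 1) this
  · intro h
    rw [G, Finset.lt_sup_iff] at h
    obtain ⟨q, hq, hlt⟩ := h
    rw [Finset.mem_filter] at hq
    exact ⟨q, hq.1, Prod.le_def.2 ⟨hq.2, Nat.lt_succ_iff.1 hlt⟩⟩

lemma mem_rm (A : Finset (Fin a × Fin b)) (p : Fin a × Fin b) :
    p ∈ rowmotionA A ↔ ((p.2 : ℕ) = G A (p.1 : ℕ) ∧
      ((p.1 : ℕ) = 0 ∨ G A (p.1 : ℕ) < G A ((p.1 : ℕ) - 1))) := by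
  simp only [rowmotionA, Finset.mem_filter, Finset.mem_univ, true_and]
  constructor
  · rintro ⟨hni, hmin⟩
    have hG : G A (p.1 : ℕ) ≤ (p.2 : ℕ) := (notin_ideal A p).1 hni
    have hGb : G A (p.1 : ℕ) < b := lt_of_le_of_lt hG p.2.2
    set z : Fin a × Fin b := (p.1, ⟨G A (p.1 : ℕ), hGb⟩) with hz
    have hzni : ¬ ∃ q ∈ A, z ≤ q := by
      rw [notin_ideal]
    have hzp : z ≤ p := Prod.le_def.2 ⟨le_refl _, hG⟩
    have heq : z = p := hmin z hzni hzp
    have hsnd : (p.2 : ℕ) = G A (p.1 : ℕ) :=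
      (congrArg (fun q : Fin a × Fin b => (q.2 : ℕ)) heq).symm
    refine ⟨hsnd, ?_⟩
    by_cases h0 : (p.1 : ℕ) = 0
    · exact Or.inl h0
    · right
      by_contra hc
      push_neg at hc
      have h1a : (p.1 : ℕ) - 1 < a := lt_of_le_of_lt (Nat.sub_le _ _) p.1.2
      set z' : Fin a × Fin b := (⟨(p.1 : ℕ) - 1, h1a⟩, p.2) with hz'
      have hz'ni : ¬ ∃ q ∈ A, z' ≤ q := by
        rw [notin_ideal]
        calc G A ((p.1 : ℕ) - 1) ≤ G A (p.1 : ℕ) := hc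
        _ ≤ (p.2 : ℕ) := hG
      have hz'p : z' ≤ p := Prod.le_def.2 ⟨Nat.sub_le _ _, le_refl _⟩
      have := hmin z' hz'ni hz'p
      have : ((p.1 : ℕ) - 1) = (p.1 : ℕ) := by
        have := congrArg (fun q => (q.1 : ℕ)) this
        simpa using this
      omega
  · rintro ⟨hsnd, hcond⟩
    have hni : ¬ ∃ q ∈ A, p ≤ q := by
      rw [notin_ideal, ← hsnd]
    refine ⟨hni, ?_⟩
    intro z hzni hzp
    rw [notin_ideal] at hzni
    rw [Prod.le_def] at hzp
    have h1 : (z.2 : ℕ) ≤ (p.2 : ℕ) := hzp.2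
    have h2 : G A (p.1 : ℕ) ≤ G A (z.1 : ℕ) := G_anti A hzp.1
    have h3 : (z.2 : ℕ) = (p.2 : ℕ) := le_antisymm h1 (by omega)
    have h4 : (z.1 : ℕ) = (p.1 : ℕ) := by
      by_contra hne
      have hlt : (z.1 : ℕ) < (p.1 : ℕ) := lt_of_le_of_ne hzp.1 hne
      have h0 : (p.1 : ℕ) ≠ 0 := by omega
      have hdrop : G A (p.1 : ℕ) < G A ((p.1 : ℕ) - 1) := hcond.resolve_left h0
      have : G A ((p.1 : ℕ) - 1) ≤ G A (z.1 : ℕ) := G_anti A (by omega)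
      omega
    ext
    · exact h4
    · exact h3

section AC

variable {A : Finset (Fin a × Fin b)}

lemma row_lt (hA : IsAntichain (· ≤ ·) (↑A : Set (Fin a × Fin b)))
    {p q : Fin a × Fin b} (hp : p ∈ A) (hq : q ∈ A) (h : (p.1 : ℕ) < (q.1 : ℕ)) :
    (q.2 : ℕ) < (p.2 : ℕ) := by
  by_contra hc
  push_neg at hc
  have hne : p ≠ q := by
    intro h'; subst h'; omega
  refine hA (Finset.mem_coe.2 hp) (Finset.mem_coe.2 hq) hne ?_
  show p ≤ q
  rw [Prod.le_def, Fin.le_def, Fin.le_def]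
  omega

lemma fst_injA (hA : IsAntichain (· ≤ ·) (↑A : Set (Fin a × Fin b)))
    {p q : Fin a × Fin b} (hp : p ∈ A) (hq : q ∈ A) (h : (p.1 : ℕ) = (q.1 : ℕ)) :
    p = q := by
  by_contra hne
  rcases lt_trichotomy (p.2 : ℕ) (q.2 : ℕ) with hlt | heq | hgt
  · refine hA (Finset.mem_coe.2 hp) (Finset.mem_coe.2 hq) hne ?_
    show p ≤ q
    rw [Prod.le_def, Fin.le_def, Fin.le_def]
    omega
  · exact hne (Prod.ext (Fin.ext h) (Fin.ext heq))
  · refine hA (Finset.mem_coe.2 hq) (Finset.mem_coe.2 hp) (Ne.symm hne) ?_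
    show q ≤ p
    rw [Prod.le_def, Fin.le_def, Fin.le_def]
    omega

lemma snd_injA (hA : IsAntichain (· ≤ ·) (↑A : Set (Fin a × Fin b)))
    {p q : Fin a × Fin b} (hp : p ∈ A) (hq : q ∈ A) (h : (p.2 : ℕ) = (q.2 : ℕ)) :
    p = q := by
  by_contra hne
  rcases lt_trichotomy (p.1 : ℕ) (q.1 : ℕ) with hlt | heq | hgt
  · refine hA (Finset.mem_coe.2 hp) (Finset.mem_coe.2 hq) hne ?_
    show p ≤ q
    rw [Prod.le_def, Fin.le_def, Fin.le_def]
    omega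
  · exact hne (Prod.ext (Fin.ext heq) (Fin.ext h))
  · refine hA (Finset.mem_coe.2 hq) (Finset.mem_coe.2 hp) (Ne.symm hne) ?_
    show q ≤ p
    rw [Prod.le_def, Fin.le_def, Fin.le_def]
    omega

lemma rm_antichain (X : Finset (Fin a × Fin b)) :
    IsAntichain (· ≤ ·) (↑(rowmotionA X) : Set (Fin a × Fin b)) := by
  intro p hp q hq hne hle
  simp only [Finset.mem_coe, rowmotionA, Finset.mem_filter] at hp hq
  exact hne (hq.2.2 p hp.2.1 hle)

lemma rowOcc_iff (hA : IsAntichain (· ≤ ·) (↑A : Set (Fin a × Fin b))) (k : ℕ) :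
    rowOcc A k ↔ G A (k + 1) < G A k := by
  constructor
  · rintro ⟨p, hp, hpk⟩
    have h1 : (p.2 : ℕ) + 1 ≤ G A k := by
      unfold G
      exact Finset.le_sup (f := fun r : Fin a × Fin b => (r.2 : ℕ) + 1)
        (Finset.mem_filter.2 ⟨hp, by omega⟩)
    have h2 : G A (k + 1) ≤ (p.2 : ℕ) := by
      apply Finset.sup_le
      intro q hq
      rw [Finset.mem_filter] at hq
      have := row_lt hA hp hq.1 (by omega)
      omega
    omega
  · intro h
    have hpos : 0 < G A k := lt_of_le_of_lt (Nat.zero_le _) h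
    obtain ⟨p, hp, hk, hval⟩ := G_attained A hpos
    refine ⟨p, hp, ?_⟩
    have hnot : ¬ (k + 1 ≤ (p.1 : ℕ)) := by
      intro hc
      have : (p.2 : ℕ) + 1 ≤ G A (k + 1) := by
        unfold G
        exact Finset.le_sup (f := fun r : Fin a × Fin b => (r.2 : ℕ) + 1)
          (Finset.mem_filter.2 ⟨hp, hc⟩)
      omega
    omega

lemma G_to_colOcc (A : Finset (Fin a × Fin b)) {k l : ℕ} (h : G A k = l + 1) :
    colOcc A l := by
  obtain ⟨p, hp, -, hval⟩ := G_attained A (k := k) (by omega)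
  exact ⟨p, hp, by omega⟩

lemma colOcc_to_G (hA : IsAntichain (· ≤ ·) (↑A : Set (Fin a × Fin b))) {l : ℕ}
    (h : colOcc A l) : ∃ k, G A k = l + 1 := by
  obtain ⟨p, hp, hpl⟩ := h
  refine ⟨(p.1 : ℕ), le_antisymm ?_ ?_⟩
  · apply Finset.sup_le
    intro q hq
    rw [Finset.mem_filter] at hq
    rcases Nat.lt_or_ge (p.1 : ℕ) (q.1 : ℕ) with hlt | hge
    · have := row_lt hA hp hq.1 hlt
      omega
    · have : (q.1 : ℕ) = (p.1 : ℕ) := by omega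
      rw [fst_injA hA hq.1 hp this]
      omega
  · unfold G
    calc l + 1 = (p.2 : ℕ) + 1 := by omega
    _ ≤ _ := Finset.le_sup (f := fun r : Fin a × Fin b => (r.2 : ℕ) + 1)
        (Finset.mem_filter.2 ⟨hp, le_refl ((p.1 : ℕ))⟩)

lemma rowOcc_rm (A : Finset (Fin a × Fin b)) (k : ℕ) :
    rowOcc (rowmotionA A) k ↔
      (k < a ∧ G A k < b ∧ (k = 0 ∨ G A k < G A (k - 1))) := by
  constructor
  · rintro ⟨p, hp, hpk⟩
    obtain ⟨hsnd, hcond⟩ := (mem_rm A p).1 hp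
    subst hpk
    exact ⟨p.1.2, by have := p.2.2; omega, hcond⟩
  · rintro ⟨hka, hGb, hcond⟩
    refine ⟨(⟨k, hka⟩, ⟨G A k, hGb⟩), ?_, rfl⟩
    rw [mem_rm]
    exact ⟨rfl, hcond⟩

lemma colOcc_rm (A : Finset (Fin a × Fin b)) (l : ℕ) :
    colOcc (rowmotionA A) l ↔
      (l < b ∧ ∃ k, k < a ∧ G A k = l ∧ (k = 0 ∨ G A k < G A (k - 1))) := by
  constructor
  · rintro ⟨p, hp, hpl⟩
    obtain ⟨hsnd, hcond⟩ := (mem_rm A p).1 hp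
    subst hpl
    exact ⟨p.2.2, (p.1 : ℕ), p.1.2, hsnd.symm, hcond⟩
  · rintro ⟨hlb, k, hka, hGk, hcond⟩
    refine ⟨(⟨k, hka⟩, ⟨l, hlb⟩), ?_, rfl⟩
    rw [mem_rm]
    exact ⟨hGk.symm, hcond⟩

lemma exists_min_G (A : Finset (Fin a × Fin b)) {v m : ℕ} (h : G A m = v) :
    ∃ k, k ≤ m ∧ G A k = v ∧ (k = 0 ∨ G A k < G A (k - 1)) := by
  have hex : ∃ k, G A k = v := ⟨m, h⟩
  refine ⟨Nat.find hex, Nat.find_le h, Nat.find_spec hex, ?_⟩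
  rcases Nat.eq_zero_or_pos (Nat.find hex) with hz | hpos
  · exact Or.inl hz
  · right
    have hmin := Nat.find_min hex (show Nat.find hex - 1 < Nat.find hex by omega)
    have hanti := G_anti A (show Nat.find hex - 1 ≤ Nat.find hex by omega)
    have hspec := Nat.find_spec hex
    omega

lemma equivariance (hA : IsAntichain (· ≤ ·) (↑A : Set (Fin a × Fin b)))
    (ha : 1 ≤ a) (hb : 1 ≤ b) (i : ℕ) :
    w (rowmotionA A) (i + 1) ↔ w A i := by
  have hN0 : 0 < a + b := by omega
  have hr : i % (a + b) < a + b := Nat.mod_lt _ hN0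
  have hmod : (i + 1) % (a + b) = (i % (a + b) + 1) % (a + b) := by
    conv_lhs => rw [Nat.add_mod]
    rw [Nat.mod_eq_of_lt (show 1 < a + b by omega)]
  simp only [w, hmod]
  set r := i % (a + b) with hrdef
  by_cases hwrap : r + 1 = a + b
  · rw [hwrap, Nat.mod_self]
    have hra : ¬ r < a := by omega
    rw [if_pos (show 0 < a by omega), if_neg hra]
    have hr' : r - a = b - 1 := by omega
    rw [hr', rowOcc_rm]
    constructor
    · rintro ⟨-, hGb, -⟩ hc
      obtain ⟨k, hk⟩ := colOcc_to_G hA hc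
      have hbb : b - 1 + 1 = b := by omega
      rw [hbb] at hk
      have := G_anti A (Nat.zero_le k)
      omega
    · intro hnc
      have hGb : G A 0 < b := by
        rcases Nat.lt_or_ge (G A 0) b with h | h
        · exact h
        · exfalso
          have hGeq : G A 0 = b := le_antisymm (G_le A 0) h
          exact hnc (G_to_colOcc A (k := 0) (by omega))
      exact ⟨by omega, hGb, Or.inl rfl⟩
  · have hlt : r + 1 < a + b := by omega
    rw [Nat.mod_eq_of_lt hlt]
    by_cases hcase : r + 1 < a
    · rw [if_pos hcase, if_pos (show r < a by omega)]
      rw [rowOcc_rm, rowOcc_iff hA]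
      have hsub : r + 1 - 1 = r := by omega
      rw [hsub]
      constructor
      · rintro ⟨-, -, hc⟩
        rcases hc with h0 | h
        · omega
        · exact h
      · intro h
        have hb' : G A (r + 1) < b := lt_of_lt_of_le h (G_le A r)
        exact ⟨by omega, hb', Or.inr h⟩
    · by_cases hceq : r + 1 = a
      · rw [if_neg hcase, if_pos (show r < a by omega)]
        rw [show r + 1 - a = 0 by omega, colOcc_rm, rowOcc_iff hA, hceq,
          G_eq_zero A (le_refl a)]
        constructor
        · intro hnc
          rcases Nat.eq_zero_or_pos (G A r) with h0 | hpos
          · exfalso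
            apply hnc
            obtain ⟨k, hk, hkv, hkc⟩ := exists_min_G A h0
            exact ⟨hb, k, by omega, hkv, hkc⟩
          · exact hpos
        · rintro h ⟨-, k, hka, hkv, -⟩
          have := G_anti A (show k ≤ r by omega)
          omega
      · have hra : ¬ r < a := by omega
        rw [if_neg (show ¬ r + 1 < a from hcase), if_neg hra]
        rw [colOcc_rm]
        have hrj : r - a = r + 1 - a - 1 := by omega
        rw [hrj]
        set j := r + 1 - a with hj
        have hjb : j < b := by omega
        have hj1 : 1 ≤ j := by omega
        apply not_congr
        constructor
        · rintro ⟨-, k, -, hGk, -⟩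
          exact G_to_colOcc A (k := k) (l := j - 1) (by omega)
        · intro hc
          obtain ⟨k, hk⟩ := colOcc_to_G hA hc
          rw [show j - 1 + 1 = j by omega] at hk
          obtain ⟨k0, hk0le, hk0v, hk0c⟩ := exists_min_G A hk
          have hk0a : k0 < a := by
            by_contra hcc
            rw [G_eq_zero A (by omega)] at hk0v
            omega
          exact ⟨hjb, k0, hk0a, hk0v, hk0c⟩

end AC

section Inj

variable {A B : Finset (Fin a × Fin b)}

noncomputable def cardRow (A : Finset (Fin a × Fin b)) (k : ℕ) : ℕ :=
  ((Finset.range a).filter (fun k' => k < k' ∧ rowOcc A k')).card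

noncomputable def cardCol (A : Finset (Fin a × Fin b)) (l : ℕ) : ℕ :=
  ((Finset.range b).filter (fun l' => l' < l ∧ colOcc A l')).card

lemma card_filter_row (hA : IsAntichain (· ≤ ·) (↑A : Set (Fin a × Fin b))) (k : ℕ) :
    (A.filter (fun q => k < (q.1 : ℕ))).card = cardRow A k := by
  apply Finset.card_bij (fun q _ => (q.1 : ℕ))
  · intro q hq
    rw [Finset.mem_filter] at hq
    rw [Finset.mem_filter, Finset.mem_range]
    exact ⟨q.1.2, hq.2, q, hq.1, rfl⟩
  · intro q hq q' hq' h
    rw [Finset.mem_filter] at hq hq'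
    exact fst_injA hA hq.1 hq'.1 h
  · intro k' hk'
    rw [Finset.mem_filter] at hk'
    obtain ⟨p, hp, hpk⟩ := hk'.2.2
    exact ⟨p, Finset.mem_filter.2 ⟨hp, by omega⟩, hpk⟩

lemma card_filter_col (hA : IsAntichain (· ≤ ·) (↑A : Set (Fin a × Fin b))) (l : ℕ) :
    (A.filter (fun q => (q.2 : ℕ) < l)).card = cardCol A l := by
  apply Finset.card_bij (fun q _ => (q.2 : ℕ))
  · intro q hq
    rw [Finset.mem_filter] at hq
    rw [Finset.mem_filter, Finset.mem_range]
    exact ⟨q.2.2, hq.2, q, hq.1, rfl⟩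
  · intro q hq q' hq' h
    rw [Finset.mem_filter] at hq hq'
    exact snd_injA hA hq.1 hq'.1 h
  · intro l' hl'
    rw [Finset.mem_filter] at hl'
    obtain ⟨p, hp, hpl⟩ := hl'.2.2
    exact ⟨p, Finset.mem_filter.2 ⟨hp, by omega⟩, hpl⟩

lemma filter_row_eq (hA : IsAntichain (· ≤ ·) (↑A : Set (Fin a × Fin b)))
    {p : Fin a × Fin b} (hp : p ∈ A) :
    A.filter (fun q => (p.1 : ℕ) < (q.1 : ℕ)) = A.filter (fun q => (q.2 : ℕ) < (p.2 : ℕ)) := by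
  apply Finset.filter_congr
  intro q hq
  constructor
  · intro h
    exact row_lt hA hp hq h
  · intro h
    rcases lt_trichotomy (p.1 : ℕ) (q.1 : ℕ) with hlt | heq | hgt
    · exact hlt
    · have := fst_injA hA hp hq heq
      subst this
      omega
    · have := row_lt hA hq hp hgt
      omega

lemma cardCol_lt {x y : ℕ} (hx : colOcc A x) (hxy : x < y) : cardCol A x < cardCol A y := by
  apply Finset.card_lt_card
  have hsub : ((Finset.range b).filter (fun l' => l' < x ∧ colOcc A l')) ⊆
      ((Finset.range b).filter (fun l' => l' < y ∧ colOcc A l')) := by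
    intro l hl
    rw [Finset.mem_filter] at hl ⊢
    exact ⟨hl.1, by omega, hl.2.2⟩
  rw [Finset.ssubset_iff_of_subset hsub]
  refine ⟨x, ?_, ?_⟩
  · obtain ⟨p, hp, hpx⟩ := hx
    rw [Finset.mem_filter, Finset.mem_range]
    exact ⟨by omega, hxy, p, hp, hpx⟩
  · rw [Finset.mem_filter]
    push_neg
    intro _ h
    omega

lemma mem_char (hA : IsAntichain (· ≤ ·) (↑A : Set (Fin a × Fin b))) (p : Fin a × Fin b) :
    p ∈ A ↔ (rowOcc A (p.1 : ℕ) ∧ colOcc A (p.2 : ℕ) ∧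
      cardRow A (p.1 : ℕ) = cardCol A (p.2 : ℕ)) := by
  constructor
  · intro hp
    refine ⟨⟨p, hp, rfl⟩, ⟨p, hp, rfl⟩, ?_⟩
    rw [← card_filter_row hA, filter_row_eq hA hp, card_filter_col hA]
  · rintro ⟨⟨q0, hq0, hq01⟩, ⟨q1, hq1, hq12⟩, hcnt⟩
    have h0 : cardRow A (q0.1 : ℕ) = cardCol A (q0.2 : ℕ) := by
      rw [← card_filter_row hA, filter_row_eq hA hq0, card_filter_col hA]
    rw [hq01] at h0
    have hcc : cardCol A (q0.2 : ℕ) = cardCol A (p.2 : ℕ) := by omega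
    have hq02 : (q0.2 : ℕ) = (p.2 : ℕ) := by
      rcases lt_trichotomy (q0.2 : ℕ) (p.2 : ℕ) with hlt | heq | hgt
      · have := cardCol_lt ⟨q0, hq0, rfl⟩ hlt
        omega
      · exact heq
      · have := cardCol_lt (x := (p.2 : ℕ)) ⟨q1, hq1, hq12⟩ hgt
        omega
    have : q0 = p := Prod.ext (Fin.ext hq01) (Fin.ext hq02)
    rw [← this]
    exact hq0

lemma w_row {X : Finset (Fin a × Fin b)} {i : ℕ} (hb : 1 ≤ b) (hi : i < a) :
    (w X i ↔ rowOcc X i) := by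
  rw [w, Nat.mod_eq_of_lt (by omega), if_pos hi]

lemma w_col {X : Finset (Fin a × Fin b)} {j : ℕ} (hj : j < b) :
    (w X (a + j) ↔ ¬ colOcc X j) := by
  rw [w, Nat.mod_eq_of_lt (by omega), if_neg (by omega), Nat.add_sub_cancel_left]

lemma word_inj (hb : 1 ≤ b)
    (hA : IsAntichain (· ≤ ·) (↑A : Set (Fin a × Fin b)))
    (hB : IsAntichain (· ≤ ·) (↑B : Set (Fin a × Fin b)))
    (hw : ∀ i, w A i ↔ w B i) : A = B := by
  have hrow : ∀ k, rowOcc A k ↔ rowOcc B k := by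
    intro k
    by_cases hk : k < a
    · rw [← w_row hb hk, ← w_row hb hk]
      exact hw k
    · constructor
      · rintro ⟨p, -, hp⟩
        exact absurd (hp ▸ p.1.2) hk
      · rintro ⟨p, -, hp⟩
        exact absurd (hp ▸ p.1.2) hk
  have hcol : ∀ l, colOcc A l ↔ colOcc B l := by
    intro l
    by_cases hl : l < b
    · have h := hw (a + l)
      rw [w_col hl, w_col hl] at h
      exact not_iff_not.mp h
    · constructor
      · rintro ⟨p, -, hp⟩
        exact absurd (hp ▸ p.2.2) hl
      · rintro ⟨p, -, hp⟩
        exact absurd (hp ▸ p.2.2) hl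
  have hcr : ∀ k, cardRow A k = cardRow B k := by
    intro k
    unfold cardRow
    congr 1
    apply Finset.filter_congr
    intro x _
    exact and_congr_right (fun _ => hrow x)
  have hccol : ∀ l, cardCol A l = cardCol B l := by
    intro l
    unfold cardCol
    congr 1
    apply Finset.filter_congr
    intro x _
    exact and_congr_right (fun _ => hcol x)
  ext p
  rw [mem_char hA, mem_char hB, hrow, hcol, hcr, hccol]

end Inj

section Iter

variable {A : Finset (Fin a × Fin b)}

lemma iterate_antichain (hA : IsAntichain (· ≤ ·) (↑A : Set (Fin a × Fin b))) :
    ∀ k, IsAntichain (· ≤ ·) (↑(rowmotionA^[k] A) : Set (Fin a × Fin b)) := by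
  intro k
  induction k with
  | zero => simpa using hA
  | succ k ih =>
      rw [Function.iterate_succ_apply']
      exact rm_antichain _

lemma w_add_N (X : Finset (Fin a × Fin b)) (i : ℕ) : w X (i + (a + b)) ↔ w X i := by
  rw [w, w, Nat.add_mod_right]

lemma w_add_mul (X : Finset (Fin a × Fin b)) (i m : ℕ) :
    w X (i + m * (a + b)) ↔ w X i := by
  induction m with
  | zero => simp
  | succ m ih =>
      rw [show i + (m + 1) * (a + b) = (i + m * (a + b)) + (a + b) by ring, w_add_N, ih]

lemma equivariance_iter (hA : IsAntichain (· ≤ ·) (↑A : Set (Fin a × Fin b)))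
    (ha : 1 ≤ a) (hb : 1 ≤ b) :
    ∀ k i, w (rowmotionA^[k] A) (i + k) ↔ w A i := by
  intro k
  induction k with
  | zero => intro i; simp
  | succ k ih =>
      intro i
      rw [Function.iterate_succ_apply', show i + (k + 1) = (i + k) + 1 from rfl,
        equivariance (iterate_antichain hA k) ha hb (i + k)]
      exact ih i

lemma card_eq_sum_rowOcc (hA : IsAntichain (· ≤ ·) (↑A : Set (Fin a × Fin b))) :
    A.card = ∑ i ∈ Finset.range a, (if rowOcc A i then 1 else 0) := by
  rw [Finset.sum_boole, Nat.cast_id]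
  apply Finset.card_bij (fun p _ => (p.1 : ℕ))
  · intro p hp
    rw [Finset.mem_filter, Finset.mem_range]
    exact ⟨p.1.2, p, hp, rfl⟩
  · intro p hp q hq h
    exact fst_injA hA hp hq h
  · intro k hk
    rw [Finset.mem_filter] at hk
    obtain ⟨p, hp, hpk⟩ := hk.2
    exact ⟨p, hp, hpk⟩

lemma card_eq_sum_colOcc (hA : IsAntichain (· ≤ ·) (↑A : Set (Fin a × Fin b))) :
    A.card = ∑ j ∈ Finset.range b, (if colOcc A j then 1 else 0) := by
  rw [Finset.sum_boole, Nat.cast_id]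
  apply Finset.card_bij (fun p _ => (p.2 : ℕ))
  · intro p hp
    rw [Finset.mem_filter, Finset.mem_range]
    exact ⟨p.2.2, p, hp, rfl⟩
  · intro p hp q hq h
    exact snd_injA hA hp hq h
  · intro l hl
    rw [Finset.mem_filter] at hl
    obtain ⟨p, hp, hpl⟩ := hl.2
    exact ⟨p, hp, hpl⟩

end Iter

lemma sum_range_add' (f : ℕ → ℕ) (m l : ℕ) :
    ∑ j ∈ Finset.range (m + l), f j =
      (∑ j ∈ Finset.range m, f j) + ∑ j ∈ Finset.range l, f (m + j) := by
  induction l with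
  | zero => simp
  | succ l ih =>
      rw [Nat.add_succ, Finset.sum_range_succ, ih, Finset.sum_range_succ]
      omega

lemma sum_window (f : ℕ → ℕ) (n : ℕ) (hp : ∀ j, f (j + n) = f j) :
    ∀ x, ∑ k ∈ Finset.range n, f (x + k) = ∑ k ∈ Finset.range n, f k := by
  intro x
  induction x with
  | zero => simp
  | succ x ih =>
      have e1 : ∑ k ∈ Finset.range (n + 1), f (x + k)
          = (∑ k ∈ Finset.range n, f (x + (k + 1))) + f (x + 0) := Finset.sum_range_succ' _ n
      have e2 : ∑ k ∈ Finset.range (n + 1), f (x + k)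
          = (∑ k ∈ Finset.range n, f (x + k)) + f (x + n) := Finset.sum_range_succ _ n
      have e3 : ∑ k ∈ Finset.range n, f (x + (k + 1)) = ∑ k ∈ Finset.range n, f ((x + 1) + k) :=
        Finset.sum_congr rfl (fun k _ => by rw [show x + (k + 1) = (x + 1) + k by omega])
      rw [e3] at e1
      rw [hp x] at e2
      have e4 := e1.symm.trans e2
      simp only [Nat.add_zero] at e4
      omega

end RowHom

theorem rowmotion_antichain_cardinality_homomesy
    (a b : ℕ) (ha : 1 ≤ a) (hb : 1 ≤ b)
    (O : Finset (Finset (Fin a × Fin b)))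
    (hO : ∃ A : Finset (Fin a × Fin b), IsAntichain (· ≤ ·) (↑A : Set (Fin a × Fin b)) ∧
      ∀ B, B ∈ O ↔ ∃ k : ℕ, rowmotionA^[k] A = B) :
    (∑ B ∈ O, (B.card : ℚ)) / O.card = (a : ℚ) * (b : ℚ) / ((a : ℚ) + (b : ℚ)) := by
  classical
  obtain ⟨A, hA, hmem⟩ := hO
  have hN0 : 0 < a + b := by omega
  -- full period a+b
  have hperN : rowmotionA^[a + b] A = A := by
    apply RowHom.word_inj hb (RowHom.iterate_antichain hA (a + b)) hA
    intro i
    have h1 := RowHom.equivariance_iter hA ha hb (a + b) i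
    have h2 := RowHom.w_add_N (rowmotionA^[a + b] A) i
    exact h2.symm.trans h1
  have hex : ∃ m, 0 < m ∧ rowmotionA^[m] A = A := ⟨a + b, hN0, hperN⟩
  set n := Nat.find hex with hndef
  obtain ⟨hn0, hnper⟩ := Nat.find_spec hex
  have hmin : ∀ m, 0 < m → m < n → rowmotionA^[m] A ≠ A := by
    intro m hm0 hmn hc
    exact Nat.find_min hex hmn ⟨hm0, hc⟩
  have hnN : n ≤ a + b := Nat.find_le ⟨hN0, hperN⟩
  have hred : ∀ k : ℕ, rowmotionA^[k] A = rowmotionA^[k % n] A := by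
    intro k
    conv_lhs => rw [← Nat.div_add_mod k n]
    generalize k / n = q
    induction q with
    | zero => simp
    | succ q ih =>
        rw [show n * (q + 1) + k % n = (n * q + k % n) + n by ring,
          Function.iterate_add_apply, hnper]
        exact ih
  have hdvd : n ∣ (a + b) := by
    rcases Nat.eq_zero_or_pos ((a + b) % n) with h0 | hpos
    · exact Nat.dvd_of_mod_eq_zero h0
    · exfalso
      have h := hred (a + b)
      rw [hperN] at h
      exact hmin _ hpos (Nat.mod_lt _ hn0) h.symm
  have hOim : O = (Finset.range n).image (fun k => rowmotionA^[k] A) := by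
    ext B
    rw [hmem B, Finset.mem_image]
    constructor
    · rintro ⟨k, hk⟩
      exact ⟨k % n, Finset.mem_range.2 (Nat.mod_lt _ hn0), by rw [← hred]; exact hk⟩
    · rintro ⟨k, -, hk⟩
      exact ⟨k, hk⟩
  have hkey : ∀ i j : ℕ, i < j → j < n → rowmotionA^[i] A ≠ rowmotionA^[j] A := by
    intro i j hij hjn hc
    have h2 : rowmotionA^[(n - j) + i] A = A := by
      rw [Function.iterate_add_apply, hc, ← Function.iterate_add_apply,
        show (n - j) + j = n by omega]
      exact hnper
    exact hmin ((n - j) + i) (by omega) (by omega) h2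
  have hinj : ∀ x ∈ Finset.range n, ∀ y ∈ Finset.range n,
      rowmotionA^[x] A = rowmotionA^[y] A → x = y := by
    intro x hx y hy hxy
    rcases lt_trichotomy x y with h | h | h
    · exact absurd hxy (hkey x y h (Finset.mem_range.1 hy))
    · exact h
    · exact absurd hxy.symm (hkey y x h (Finset.mem_range.1 hx))
  have hcard : O.card = n := by
    rw [hOim, Finset.card_image_of_injOn hinj, Finset.card_range]
  have hsum : ∑ B ∈ O, (B.card : ℚ)
      = ∑ k ∈ Finset.range n, ((rowmotionA^[k] A).card : ℚ) := by
    rw [hOim, Finset.sum_image hinj]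
  -- counting in ℕ
  set cnt : ℕ → ℕ := fun j => if RowHom.w A j then 1 else 0 with hcnt
  set s := ∑ j ∈ Finset.range n, cnt j with hs
  have hpern : ∀ j, RowHom.w A (j + n) ↔ RowHom.w A j := by
    intro j
    have h := RowHom.equivariance_iter hA ha hb n j
    rw [hnper] at h
    exact h
  have hcntper : ∀ j, cnt (j + n) = cnt j := by
    intro j
    simp only [hcnt]
    by_cases h : RowHom.w A j
    · rw [if_pos ((hpern j).2 h), if_pos h]
    · rw [if_neg (fun hc => h ((hpern j).1 hc)), if_neg h]
  have hcntmod : ∀ j, cnt j = cnt (j % n) := by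
    intro j
    conv_lhs => rw [← Nat.div_add_mod j n]
    generalize j / n = q
    induction q with
    | zero => simp
    | succ q ih =>
        rw [show n * (q + 1) + j % n = (n * q + j % n) + n by ring, hcntper]
        exact ih
  have hwindow : ∀ x, ∑ k ∈ Finset.range n, cnt (x + k) = s :=
    fun x => (RowHom.sum_window cnt n hcntper x).trans hs.symm
  -- cardinalities of iterates
  have hprop : ∀ k i : ℕ, i < a →
      (RowHom.rowOcc (rowmotionA^[k] A) i ↔ RowHom.w A (i + k * (a + b - 1))) := by
    intro k i hia
    rw [← RowHom.w_row hb hia]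
    have h1 : RowHom.w (rowmotionA^[k] A) i
        ↔ RowHom.w (rowmotionA^[k] A) (i + k * (a + b)) :=
      (RowHom.w_add_mul _ i k).symm
    have he : i + k * (a + b) = (i + k * (a + b - 1)) + k := by
      have h2 : k * (a + b) = k * (a + b - 1) + k := by
        conv_lhs => rw [show a + b = (a + b - 1) + 1 by omega]
        rw [Nat.mul_succ]
      omega
    rw [h1, he]
    exact RowHom.equivariance_iter hA ha hb k (i + k * (a + b - 1))
  have hcard_it : ∀ k : ℕ, (rowmotionA^[k] A).card
      = ∑ i ∈ Finset.range a, cnt (i + k * (a + b - 1)) := by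
    intro k
    rw [RowHom.card_eq_sum_rowOcc (RowHom.iterate_antichain hA k)]
    apply Finset.sum_congr rfl
    intro i hi
    have hia := Finset.mem_range.1 hi
    have h := hprop k i hia
    simp only [hcnt]
    by_cases hc : RowHom.rowOcc (rowmotionA^[k] A) i
    · rw [if_pos hc, if_pos (h.1 hc)]
    · rw [if_neg hc, if_neg (fun hx => hc (h.2 hx))]
  -- reindexing each window
  have hreidx : ∀ i : ℕ, ∑ k ∈ Finset.range n, cnt (i + k * (a + b - 1)) = s := by
    intro i
    have hbij : ∑ k ∈ Finset.range n, cnt (i + k * (a + b - 1))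
        = ∑ k ∈ Finset.range n, cnt (i + k) := by
      apply Finset.sum_nbij' (i := fun k => (n - k) % n) (j := fun k => (n - k) % n)
      · intro k _
        exact Finset.mem_range.2 (Nat.mod_lt _ hn0)
      · intro k _
        exact Finset.mem_range.2 (Nat.mod_lt _ hn0)
      · intro k hk
        have hkn := Finset.mem_range.1 hk
        rcases Nat.eq_zero_or_pos k with h0 | hpos
        · subst h0; simp [Nat.mod_self]
        · rw [Nat.mod_eq_of_lt (show n - k < n by omega), show n - (n - k) = k by omega,
            Nat.mod_eq_of_lt hkn]
      · intro k hk
        have hkn := Finset.mem_range.1 hk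
        rcases Nat.eq_zero_or_pos k with h0 | hpos
        · subst h0; simp [Nat.mod_self]
        · rw [Nat.mod_eq_of_lt (show n - k < n by omega), show n - (n - k) = k by omega,
            Nat.mod_eq_of_lt hkn]
      · intro k hk
        have hkn := Finset.mem_range.1 hk
        -- cnt (i + k * (a+b-1)) = cnt (i + (n - k) % n)
        rw [hcntmod (i + k * (a + b - 1)), hcntmod (i + (n - k) % n)]
        congr 1
        -- need: (i + k*(a+b-1)) % n = (i + (n-k) % n) % n
        have hz : (k * (a + b)) % n = 0 := by
          obtain ⟨q, hq⟩ := hdvd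
          rw [hq, show k * (n * q) = n * (k * q) by ring]
          exact Nat.mul_mod_right n (k * q)
        have hL : i + k * (a + b - 1) + k = i + k * (a + b) := by
          have h2 : k * (a + b) = k * (a + b - 1) + k := by
            conv_lhs => rw [show a + b = (a + b - 1) + 1 by omega]
            rw [Nat.mul_succ]
          omega
        have h3 : i + k * (a + b - 1) + k ≡ (i + (n - k)) + k [MOD n] := by
          rw [hL, show i + (n - k) + k = i + n by omega]
          apply Nat.ModEq.add_left i
          show (k * (a + b)) % n = n % n
          rw [hz, Nat.mod_self]
        have h4 : i + k * (a + b - 1) ≡ i + (n - k) [MOD n] :=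
          Nat.ModEq.add_right_cancel' k h3
        have h5 : i + (n - k) % n ≡ i + (n - k) [MOD n] :=
          Nat.ModEq.add_left i (Nat.mod_modEq _ _)
        exact h4.trans h5.symm
    rw [hbij, hwindow i]
  -- total orbit sum in ℕ
  have htot : ∑ k ∈ Finset.range n, (rowmotionA^[k] A).card = a * s := by
    calc ∑ k ∈ Finset.range n, (rowmotionA^[k] A).card
        = ∑ k ∈ Finset.range n, ∑ i ∈ Finset.range a, cnt (i + k * (a + b - 1)) :=
          Finset.sum_congr rfl (fun k _ => hcard_it k)
    _ = ∑ i ∈ Finset.range a, ∑ k ∈ Finset.range n, cnt (i + k * (a + b - 1)) :=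
          Finset.sum_comm
    _ = ∑ i ∈ Finset.range a, s := Finset.sum_congr rfl (fun i _ => hreidx i)
    _ = a * s := by rw [Finset.sum_const, Finset.card_range, smul_eq_mul]
  -- the full word has exactly b ones
  have hblocks : ∑ j ∈ Finset.range (a + b), cnt j = ((a + b) / n) * s := by
    conv_lhs => rw [show a + b = (a + b) / n * n from (Nat.div_mul_cancel hdvd).symm]
    generalize (a + b) / n = q
    induction q with
    | zero => simp
    | succ q ih =>
        rw [show (q + 1) * n = q * n + n by ring, RowHom.sum_range_add', ih]
        have h6 : ∑ j ∈ Finset.range n, cnt (q * n + j) = s := by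
          have h7 : ∑ j ∈ Finset.range n, cnt (q * n + j)
              = ∑ j ∈ Finset.range n, cnt j := by
            apply Finset.sum_congr rfl
            intro j hj
            rw [hcntmod (q * n + j), show (q * n + j) % n = j % n by
              rw [show q * n + j = j + n * q by ring, Nat.add_mul_mod_self_left]]
            exact (hcntmod j).symm
          rw [h7, hs]
        rw [h6]
        ring
  have hcb : ∑ j ∈ Finset.range (a + b), cnt j = b := by
    rw [RowHom.sum_range_add' cnt a b]
    have hA1 : ∑ j ∈ Finset.range a, cnt j = A.card := by
      rw [RowHom.card_eq_sum_rowOcc hA]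
      apply Finset.sum_congr rfl
      intro j hj
      have hja := Finset.mem_range.1 hj
      have h := RowHom.w_row (X := A) hb hja
      simp only [hcnt]
      by_cases hc : RowHom.w A j
      · rw [if_pos hc, if_pos (h.1 hc)]
      · rw [if_neg hc, if_neg (fun hx => hc (h.2 hx))]
    have hsum2 : ∑ j ∈ Finset.range b, (cnt (a + j) + (if RowHom.colOcc A j then 1 else 0))
        = b := by
      rw [Finset.sum_congr rfl (fun j hj => ?_), Finset.sum_const, Finset.card_range,
        smul_eq_mul, mul_one]
      have hjb := Finset.mem_range.1 hj
      have h := RowHom.w_col (X := A) hjb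
      simp only [hcnt]
      by_cases hc : RowHom.colOcc A j
      · rw [if_neg (fun hx => (h.1 hx) hc), if_pos hc]
        omega
      · rw [if_pos (h.2 hc), if_neg hc]
        omega
    rw [Finset.sum_add_distrib] at hsum2
    have hA2 : ∑ j ∈ Finset.range b, (if RowHom.colOcc A j then 1 else 0) = A.card :=
      (RowHom.card_eq_sum_colOcc hA).symm
    omega
  have hqs : ((a + b) / n) * s = b := by rw [← hblocks, hcb]
  have hnat : a * s * (a + b) = a * b * n := by
    calc a * s * (a + b) = a * s * ((a + b) / n * n) := by rw [Nat.div_mul_cancel hdvd]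
    _ = a * (((a + b) / n) * s) * n := by ring
    _ = a * b * n := by rw [hqs]
  rw [hsum, hcard]
  have hsumnat : ∑ k ∈ Finset.range n, ((rowmotionA^[k] A).card : ℚ) = ((a * s : ℕ) : ℚ) := by
    rw [← Nat.cast_sum, htot]
  rw [hsumnat]
  have hn0' : (n : ℚ) ≠ 0 := by
    exact_mod_cast hn0.ne'
  have hab0 : ((a : ℚ) + (b : ℚ)) ≠ 0 := by
    have : (0 : ℚ) < (a : ℚ) + (b : ℚ) := by exact_mod_cast hN0
    exact this.ne'
  rw [div_eq_div_iff hn0' hab0]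
  exact_mod_cast hnat
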